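/- Let a ≥ 2, c ≥ 1, d ≥ 1 and n ≥ 1 be integers with c < a and cn + d ≤ an. Then n times the number of pairs (f, i), where f : Fin(an) → ℤ has all values in {1, −1} with exactly cn+d values equal to 1 (a lattice path of cn+d upsteps and an−(cn+d) downsteps), 1 ≤ i ≤ d, and every interior a-divisible point of f lies strictly above the baseline for (f, i) (i.e. an·(S(f, m) − 2(i−1)) > m·(2−(a−2c)n) for every m with 0 < m < an and a ∣ m), equals d·C(an, cn+d). Equivalently, (d/n)·C(an, cn+d) is the number of lattice paths of cn+d upsteps and an−(cn+d) downsteps which start at (0, −2i) for some i ≥ 0 and have all interior a-divisible points strictly above the line through the origin of slope −((a−2c)n−2)/(an). -/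

import Mathlib

/-- The height of the path `f` at point `m`: the partial sum `S(f, m) = Σ_{t < m} f(t)`. -/
def pathSum {N : ℕ} (f : Fin N → ℤ) (m : ℕ) : ℤ :=
  ∑ t ∈ Finset.univ.filter (fun t : Fin N => (t : ℕ) < m), f t

/-- A lattice path of `c*n+d` upsteps and `a*n − (c*n+d)` downsteps: a function
`f : Fin (a*n) → ℤ` with all values in {1, −1} and exactly `c*n+d` values equal to 1. -/
def IsLatticePath (a c d n : ℕ) (f : Fin (a * n) → ℤ) : Prop :=
  (∀ t, f t = 1 ∨ f t = -1) ∧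
    (Finset.univ.filter (fun t : Fin (a * n) => f t = 1)).card = c * n + d

open Finset
open scoped Classical

/-- indicator path of an up-step set -/
def indic {N : ℕ} (s : Finset (Fin N)) : Fin N → ℤ := fun t => if t ∈ s then 1 else -1

/-- rotation of a path by `v` -/
def rotFn {N : ℕ} [NeZero N] (v : Fin N) (f : Fin N → ℤ) : Fin N → ℤ := fun t => f (t + v)

/-- the Good predicate with shifted index `i = p.2 - 1 ∈ [0,d)` -/
def Good (a c n : ℕ) (f : Fin (a * n) → ℤ) (i : ℕ) : Prop :=
  ∀ m : ℕ, 0 < m → m < a * n → a ∣ m →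
    ((a * n : ℕ) : ℤ) * (pathSum f m - 2 * (i : ℤ)) >
      (m : ℤ) * (2 - ((a : ℤ) - 2 * (c : ℤ)) * (n : ℤ))

/-- periodic extension of a path to ℕ -/
def fhat {N : ℕ} [NeZero N] (f : Fin N → ℤ) (x : ℕ) : ℤ :=
  f ⟨x % N, Nat.mod_lt _ (Nat.pos_of_ne_zero (NeZero.ne N))⟩

/-- number of up-steps among the first `y` steps of the periodic extension -/
def Uct {N : ℕ} [NeZero N] (f : Fin N → ℤ) (y : ℕ) : ℕ :=
  ((range y).filter (fun t => fhat f t = 1)).card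

/-- the fundamental renormalized height -/
def Fpath (a c : ℕ) {N : ℕ} [NeZero N] (f : Fin N → ℤ) (x : ℕ) : ℤ :=
  (Uct f (a * x) : ℤ) - (c : ℤ) * x

lemma filter_indic {N : ℕ} (s : Finset (Fin N)) :
    Finset.univ.filter (fun t => indic s t = 1) = s := by
  ext t
  simp only [Finset.mem_filter, Finset.mem_univ, true_and, indic]
  by_cases h : t ∈ s <;> simp [h]

lemma indic_pm {N : ℕ} (s : Finset (Fin N)) (t : Fin N) :
    indic s t = 1 ∨ indic s t = -1 := by
  unfold indic; split <;> simp

lemma indic_filter {N : ℕ} (f : Fin N → ℤ) (h : ∀ t, f t = 1 ∨ f t = -1) :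
    indic (Finset.univ.filter (fun t => f t = 1)) = f := by
  funext t
  simp only [indic, Finset.mem_filter, Finset.mem_univ, true_and]
  rcases h t with h1 | h1 <;> simp [h1]

lemma rotFn_indic {N : ℕ} [NeZero N] (v : Fin N) (s : Finset (Fin N)) :
    rotFn v (indic s) = indic (s.image (· - v)) := by
  funext t
  simp only [rotFn, indic, Finset.mem_image]
  have : (∃ u ∈ s, u - v = t) ↔ t + v ∈ s := by
    constructor
    · rintro ⟨u, hu, rfl⟩; simpa [sub_add_cancel] using hu
    · intro h; exact ⟨t + v, h, by rw [add_sub_cancel_right]⟩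
  exact if_congr this.symm rfl rfl

/-- counting helper: filter over a product -/
lemma card_filter_prod {α β : Type*} [Fintype α] [Fintype β]
    (P₁ : α → Prop) (P₂ : α → β → Prop) :
    (Finset.univ.filter (fun r : α × β => P₁ r.1 ∧ P₂ r.1 r.2)).card
      = ∑ s ∈ Finset.univ.filter P₁, (Finset.univ.filter (fun i => P₂ s i)).card := by
  rw [Finset.card_filter, Fintype.sum_prod_type, Finset.sum_filter]
  refine Finset.sum_congr rfl fun s _ => ?_
  by_cases h : P₁ s
  · rw [if_pos h, Finset.card_filter]
    exact Finset.sum_congr rfl fun y _ => if_congr (and_iff_right h) rfl rfl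
  · rw [if_neg h]
    exact Finset.sum_eq_zero fun y _ => if_neg (fun hy => h hy.1)

lemma card_filter_fin (d : ℕ) (P : ℕ → Prop) :
    (Finset.univ.filter (fun i : Fin d => P i.val)).card = ((range d).filter P).card := by
  rw [Finset.card_filter, Finset.card_filter]
  exact Fin.sum_univ_eq_sum_range (fun x => if P x then 1 else 0) d

section PathLemmas

variable {N : ℕ} [NeZero N]

lemma fhat_period (f : Fin N → ℤ) (x : ℕ) : fhat f (x + N) = fhat f x := by
  unfold fhat; congr 1; exact Fin.ext (by simp [Nat.add_mod_right])

lemma fhat_lt (f : Fin N → ℤ) (t : Fin N) : fhat f t.val = f t := by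
  unfold fhat; congr 1; exact Fin.ext (by simp [Nat.mod_eq_of_lt t.isLt])

lemma pathSum_eq_range (g : Fin N → ℤ) (m : ℕ) (hm : m ≤ N) :
    pathSum g m = ∑ x ∈ range m, fhat g x := by
  unfold pathSum
  rw [Finset.sum_filter]
  have h2 : ∀ t : Fin N, (if (t : ℕ) < m then g t else 0)
      = (fun x : ℕ => if x < m then fhat g x else 0) t.val := by
    intro t; by_cases h : (t : ℕ) < m <;> simp [h, fhat_lt]
  rw [Finset.sum_congr rfl (fun t _ => h2 t),
    Fin.sum_univ_eq_sum_range (fun x => if x < m then fhat g x else 0) N,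
    ← Finset.sum_filter]
  have h3 : (range N).filter (fun x => x < m) = range m := by
    ext x; simp only [Finset.mem_filter, Finset.mem_range]; omega
  rw [h3]

lemma fhat_rot (f : Fin N → ℤ) (v : Fin N) (x : ℕ) :
    fhat (rotFn v f) x = fhat f (x + v.val) := by
  unfold fhat rotFn
  congr 1
  exact Fin.ext (by simp [Fin.add_def, Nat.mod_add_mod])

lemma sum_fhat_shift (f : Fin N → ℤ) (w m' : ℕ) :
    ∑ x ∈ range m', fhat f (x + w)
      = (∑ x ∈ range (w + m'), fhat f x) - ∑ x ∈ range w, fhat f x := by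
  rw [eq_sub_iff_add_eq, add_comm]
  have h1 : ∑ x ∈ Finset.Ico w (w + m'), fhat f x
      = (∑ x ∈ range (w + m'), fhat f x) - ∑ x ∈ range w, fhat f x :=
    Finset.sum_Ico_eq_sub _ (Nat.le_add_right w m')
  have h2 : ∑ x ∈ Finset.Ico w (w + m'), fhat f x = ∑ x ∈ range m', fhat f (x + w) := by
    rw [Finset.sum_Ico_eq_sum_range]
    simp only [Nat.add_sub_cancel_left]
    exact Finset.sum_congr rfl fun x _ => by rw [add_comm]
  rw [← h2, h1]; ring

lemma Uct_succ (f : Fin N → ℤ) (y : ℕ) :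
    Uct f (y + 1) = Uct f y + if fhat f y = 1 then 1 else 0 := by
  unfold Uct
  rw [Finset.range_add_one, Finset.filter_insert]
  split
  · rw [Finset.card_insert_of_notMem
      (fun h => absurd (Finset.mem_range.mp (Finset.mem_filter.mp h).1) (lt_irrefl y))]
  · rfl

lemma sum_eq_UP (f : Fin N → ℤ) (hpm : ∀ t, f t = 1 ∨ f t = -1) (y : ℕ) :
    ∑ x ∈ range y, fhat f x = 2 * (Uct f y : ℤ) - y := by
  induction y with
  | zero => simp [Uct]
  | succ y ih =>
    rw [Finset.sum_range_succ, ih, Uct_succ]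
    rcases hpm ⟨y % N, Nat.mod_lt _ (Nat.pos_of_ne_zero (NeZero.ne N))⟩ with h | h <;>
      · have h' : fhat f y = _ := h
        simp only [h', if_pos, if_neg, reduceIte]
        push_cast
        ring

lemma Uct_N (f : Fin N → ℤ) :
    Uct f N = (Finset.univ.filter (fun t => f t = 1)).card := by
  unfold Uct
  rw [Finset.card_filter, Finset.card_filter,
    ← Fin.sum_univ_eq_sum_range (fun x => if fhat f x = 1 then 1 else 0) N]
  exact Finset.sum_congr rfl fun t _ => by rw [fhat_lt]

lemma Uct_period (f : Fin N → ℤ) (K : ℕ)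
    (hcard : (Finset.univ.filter (fun t => f t = 1)).card = K) (y : ℕ) :
    Uct f (y + N) = Uct f y + K := by
  induction y with
  | zero =>
    have : (0 : ℕ) + N = N := by omega
    rw [this, Uct_N, hcard]
    simp [Uct]
  | succ y ih =>
    have h1 : y + 1 + N = (y + N) + 1 := by omega
    rw [h1, Uct_succ, Uct_succ, ih, fhat_period]
    omega

end PathLemmas

lemma good_iff (a c d n : ℕ) (ha : 1 ≤ a) (hn : 1 ≤ n) [NeZero (a * n)]
    (f : Fin (a * n) → ℤ) (hf : IsLatticePath a c d n f)
    (j i : ℕ) (hj : j < n) (hi : i < d) :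
    Good a c n (rotFn ⟨(a * j) % (a * n),
        Nat.mod_lt _ (Nat.pos_of_ne_zero (NeZero.ne _))⟩ f) i
      ↔ ∀ l, 0 < l → l < n → Fpath a c f (j + l) > Fpath a c f j + (i : ℤ) := by
  have hN : 0 < a * n := Nat.pos_of_ne_zero (NeZero.ne _)
  have ha0 : 0 < a := by omega
  have ha' : (0 : ℤ) < (a : ℤ) := by exact_mod_cast ha
  have hn' : (0 : ℤ) < (n : ℤ) := by exact_mod_cast hn
  set v : Fin (a * n) := ⟨(a * j) % (a * n),
    Nat.mod_lt _ (Nat.pos_of_ne_zero (NeZero.ne _))⟩ with hv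
  have hvval : (v : ℕ) = a * j := Nat.mod_eq_of_lt (mul_lt_mul_of_pos_left hj ha0)
  have hps : ∀ l : ℕ, l ≤ n → pathSum (rotFn v f) (a * l)
      = (2 * (Uct f (a * (j + l)) : ℤ) - ((a * (j + l) : ℕ) : ℤ))
        - (2 * (Uct f (a * j) : ℤ) - ((a * j : ℕ) : ℤ)) := by
    intro l hl
    rw [pathSum_eq_range _ _ (Nat.mul_le_mul_left a hl)]
    have h1 : ∀ x ∈ range (a * l), fhat (rotFn v f) x = fhat f (x + a * j) := by
      intro x _; rw [fhat_rot, hvval]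
    rw [Finset.sum_congr rfl h1, sum_fhat_shift f (a * j) (a * l)]
    have h2 : a * j + a * l = a * (j + l) := by ring
    rw [h2, sum_eq_UP f hf.1, sum_eq_UP f hf.1]
  have key : ∀ l : ℕ, Fpath a c f (j + l) - Fpath a c f j - (i : ℤ)
      = (Uct f (a * (j + l)) : ℤ) - (Uct f (a * j) : ℤ) - (i : ℤ)
        - (c : ℤ) * (l : ℤ) := by
    intro l; unfold Fpath; push_cast; ring
  have hiden : ∀ l : ℕ, ((a * n : ℕ) : ℤ) *
      ((((2 * (Uct f (a * (j + l)) : ℤ) - ((a * (j + l) : ℕ) : ℤ))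
        - (2 * (Uct f (a * j) : ℤ) - ((a * j : ℕ) : ℤ)))) - 2 * (i : ℤ))
      - ((a * l : ℕ) : ℤ) * (2 - ((a : ℤ) - 2 * (c : ℤ)) * (n : ℤ))
      = 2 * (a : ℤ) * ((n : ℤ) * ((Uct f (a * (j + l)) : ℤ) - (Uct f (a * j) : ℤ)
          - (i : ℤ) - (c : ℤ) * (l : ℤ)) - (l : ℤ)) := by
    intro l; push_cast; ring
  constructor
  · intro h l hl0 hln
    have hm := h (a * l) (Nat.mul_pos ha0 hl0)
      (mul_lt_mul_of_pos_left hln ha0) ⟨l, rfl⟩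
    rw [hps l (le_of_lt hln)] at hm
    set k : ℤ := (Uct f (a * (j + l)) : ℤ) - (Uct f (a * j) : ℤ) - (i : ℤ)
      - (c : ℤ) * (l : ℤ) with hk
    have hpos : (0 : ℤ) < 2 * (a : ℤ) * ((n : ℤ) * k - (l : ℤ)) := by
      rw [hk]; rw [← hiden l]; linarith [hm]
    have hnkl : (0 : ℤ) < (n : ℤ) * k - (l : ℤ) := by
      by_contra h'
      push_neg at h'
      have : 2 * (a : ℤ) * ((n : ℤ) * k - (l : ℤ)) ≤ 0 :=
        mul_nonpos_of_nonneg_of_nonpos (by positivity) h'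
      linarith
    have hl' : (0 : ℤ) < (l : ℤ) := by exact_mod_cast hl0
    have hk0 : (0 : ℤ) < k := by
      by_contra h'
      push_neg at h'
      have : (n : ℤ) * k ≤ 0 := mul_nonpos_of_nonneg_of_nonpos hn'.le h'
      linarith
    have hk1 : (1 : ℤ) ≤ k := hk0
    have := key l
    rw [← hk] at this
    linarith [this, hk1]
  · intro h m hm0 hmN hdvd
    obtain ⟨l, rfl⟩ := hdvd
    have hl0 : 0 < l := by
      rcases Nat.eq_zero_or_pos l with h0 | h0
      · subst h0; omega
      · exact h0
    have hln : l < n := lt_of_mul_lt_mul_left hmN (Nat.zero_le a)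
    have hF := h l hl0 hln
    set k : ℤ := (Uct f (a * (j + l)) : ℤ) - (Uct f (a * j) : ℤ) - (i : ℤ)
      - (c : ℤ) * (l : ℤ) with hk
    have hk0 : (0 : ℤ) < k := by
      have := key l
      rw [← hk] at this
      linarith [hF, this]
    have hk1 : (1 : ℤ) ≤ k := hk0
    have hl' : (l : ℤ) < (n : ℤ) := by exact_mod_cast hln
    have hnk : (n : ℤ) ≤ (n : ℤ) * k := by
      calc (n : ℤ) = (n : ℤ) * 1 := by ring
        _ ≤ (n : ℤ) * k := mul_le_mul_of_nonneg_left hk1 hn'.le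
    have hpos : (0 : ℤ) < 2 * (a : ℤ) * ((n : ℤ) * k - (l : ℤ)) :=
      mul_pos (by positivity) (by linarith)
    rw [hps l (le_of_lt hln)]
    have := hiden l
    rw [← hk] at this
    linarith [this, hpos]

/-- Core cycle lemma: for `F : ℕ → ℤ` with `F (x+n) = F x + d`, the number of pairs
`(j,i)` with `j < n`, `i < d` such that `F (j+l) > F j + i` for all `0 < l < n`
is exactly `d`. -/
lemma cycle_core (n d : ℕ) (hn : 1 ≤ n) (F : ℕ → ℤ)
    (hF : ∀ x, F (x + n) = F x + d) :
    ∑ j ∈ range n, ((range d).filter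
      (fun i : ℕ => ∀ l, 0 < l → l < n → F (j + l) > F j + (i : ℤ))).card = d := by
  classical
  have hne : ∀ x : ℕ, (Finset.Ico x (x + n)).Nonempty := by
    intro x; exact ⟨x, by simp; omega⟩
  set M : ℕ → ℤ := fun x => (Finset.Ico x (x + n)).inf' (hne x) F with hM
  have hMle : ∀ x s, x ≤ s → s < x + n → M x ≤ F s := by
    intro x s h1 h2
    exact Finset.inf'_le _ (by simp [Finset.mem_Ico]; omega)
  have hMmem : ∀ x, ∃ s, x ≤ s ∧ s < x + n ∧ M x = F s := by
    intro x
    obtain ⟨s, hs, hFs⟩ := Finset.exists_mem_eq_inf' (hne x) F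
    rw [Finset.mem_Ico] at hs
    exact ⟨s, hs.1, hs.2, hFs⟩
  have hMge : ∀ x b, (∀ s, x ≤ s → s < x + n → b ≤ F s) → b ≤ M x := by
    intro x b hb
    apply Finset.le_inf'
    intro s hs; rw [Finset.mem_Ico] at hs; exact hb s hs.1 hs.2
  -- key per-j identity
  have key : ∀ j, (((range d).filter
      (fun i : ℕ => ∀ l, 0 < l → l < n → F (j + l) > F j + (i : ℤ))).card : ℤ)
      = M (j + 1) - M j := by
    intro j
    -- the condition is equivalent to (i : ℤ) < M (j+1) - F j
    have hequiv : ∀ i : ℕ, i < d →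
        ((∀ l, 0 < l → l < n → F (j + l) > F j + i) ↔ (i : ℤ) < M (j + 1) - F j) := by
      intro i hid
      constructor
      · intro h
        obtain ⟨s, hs1, hs2, hs3⟩ := hMmem (j + 1)
        rw [hs3]
        rcases lt_or_ge s (j + n) with hlt | hge
        · have := h (s - j) (by omega) (by omega)
          have hsj : j + (s - j) = s := by omega
          rw [hsj] at this; linarith
        · have hsn : s = j + n := by omega
          rw [hsn, hF j]
          have : (i : ℤ) < d := by exact_mod_cast hid
          linarith
      · intro h l hl1 hl2
        have : M (j + 1) ≤ F (j + l) := hMle (j + 1) (j + l) (by omega) (by omega)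
        linarith
    -- count the i's
    have hcount : ((range d).filter
        (fun i : ℕ => ∀ l, 0 < l → l < n → F (j + l) > F j + (i : ℤ)))
        = range (M (j + 1) - F j).toNat := by
      ext i
      simp only [Finset.mem_filter, Finset.mem_range]
      constructor
      · rintro ⟨hid, hgood⟩
        have := (hequiv i hid).1 hgood
        omega
      · intro hi
        have h1 : (i : ℤ) < M (j + 1) - F j := by omega
        have hMub : M (j + 1) ≤ F j + d := by
          have := hMle (j + 1) (j + n) (by omega) (by omega)
          rw [hF j] at this; exact this
        have hid : i < d := by omega
        exact ⟨hid, (hequiv i hid).2 h1⟩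
    rw [hcount, Finset.card_range]
    -- M (j+1) - M j = max (M (j+1) - F j) 0
    rcases le_or_gt (M (j + 1)) (F j) with hc | hc
    · -- toNat = 0, and M (j+1) = M j
      have h0 : (M (j + 1) - F j).toNat = 0 := by omega
      have hup : M j ≤ M (j + 1) := by
        apply hMge
        intro s hs1 hs2
        rcases lt_or_ge s (j + n) with h | h
        · exact hMle j s (by omega) h
        · have hsn : s = j + n := by omega
          rw [hsn, hF j]
          have := hMle j j (le_refl j) (by omega)
          omega
      have hdown : M (j + 1) ≤ M j := by
        apply hMge
        intro s hs1 hs2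
        rcases eq_or_lt_of_le hs1 with h | h
        · rw [← h]; exact hc
        · exact hMle (j + 1) s h (by omega)
      omega
    · -- M j = F j
      have hMj : M j = F j := by
        have h1 : M j ≤ F j := hMle j j (le_refl j) (by omega)
        have h2 : F j ≤ M j := by
          apply hMge
          intro s hs1 hs2
          rcases eq_or_lt_of_le hs1 with h | h
          · rw [← h]
          · have := hMle (j + 1) s h (by omega)
            omega
        omega
      omega
  -- telescoping
  have htel : ∑ j ∈ range n, (M (j + 1) - M j) = M n - M 0 := Finset.sum_range_sub M n
  have hMn : M n = M 0 + d := by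
    have : M (0 + n) = M 0 + d := by
      apply le_antisymm
      · obtain ⟨s, hs1, hs2, hs3⟩ := hMmem 0
        have h4 : M (0 + n) ≤ F (s + n) := hMle (0 + n) (s + n) (by omega) (by omega)
        rw [hF s, ← hs3] at h4; exact h4
      · apply hMge
        intro s hs1 hs2
        have h5 : F s = F (s - n) + d := by
          have := hF (s - n)
          have hsn : s - n + n = s := by omega
          rw [hsn] at this; exact this
        rw [h5]
        have := hMle 0 (s - n) (by omega) (by omega)
        omega
    simpa using this
  have : (∑ j ∈ range n, (((range d).filter
      (fun i : ℕ => ∀ l, 0 < l → l < n → F (j + l) > F j + (i : ℤ))).card : ℤ)) = d := by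
    calc ∑ j ∈ range n, (((range d).filter
        (fun i : ℕ => ∀ l, 0 < l → l < n → F (j + l) > F j + (i : ℤ))).card : ℤ)
        = ∑ j ∈ range n, (M (j + 1) - M j) := by
          exact Finset.sum_congr rfl (fun j _ => key j)
      _ = M n - M 0 := htel
      _ = d := by rw [hMn]; ring
  exact_mod_cast (by push_cast at this ⊢; exact this : ((∑ j ∈ range n, ((range d).filter
      (fun i : ℕ => ∀ l, 0 < l → l < n → F (j + l) > F j + (i : ℤ))).card : ℕ) : ℤ) = d)

lemma path_cycle (a c d n : ℕ) (ha : 1 ≤ a) (hn : 1 ≤ n) [NeZero (a * n)]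
    (f : Fin (a * n) → ℤ) (hf : IsLatticePath a c d n f)
    (v : ℕ → Fin (a * n)) (hv : ∀ j, (v j : ℕ) = (a * j) % (a * n)) :
    ∑ j ∈ range n, (Finset.univ.filter
      (fun i : Fin d => Good a c n (rotFn (v j) f) (i : ℕ))).card = d := by
  have hFd : ∀ x, Fpath a c f (x + n) = Fpath a c f x + (d : ℤ) := by
    intro x
    unfold Fpath
    have h1 : a * (x + n) = a * x + a * n := by ring
    rw [h1, Uct_period f (c * n + d) hf.2]
    push_cast; ring
  refine Eq.trans ?_ (cycle_core n d hn (Fpath a c f) hFd)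
  refine Finset.sum_congr rfl fun j hj => ?_
  rw [Finset.mem_range] at hj
  have hvj : v j = ⟨(a * j) % (a * n),
      Nat.mod_lt _ (Nat.pos_of_ne_zero (NeZero.ne _))⟩ := Fin.ext (hv j)
  rw [hvj]
  refine Eq.trans (card_filter_fin d (fun i => Good a c n (rotFn ⟨(a * j) % (a * n),
      Nat.mod_lt _ (Nat.pos_of_ne_zero (NeZero.ne _))⟩ f) i)) ?_
  congr 1
  refine Finset.filter_congr fun i hi => ?_
  rw [Finset.mem_range] at hi
  exact good_iff a c d n ha hn f hf j i hj hi

set_option maxHeartbeats 2000000 in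
theorem stmt_12 (a c d n : ℕ) (ha : 2 ≤ a) (hc : 1 ≤ c) (hd : 1 ≤ d) (hn : 1 ≤ n)
    (hca : c < a) (hcd : c * n + d ≤ a * n) :
    n * Nat.card {p : (Fin (a * n) → ℤ) × ℕ //
        IsLatticePath a c d n p.1 ∧ 1 ≤ p.2 ∧ p.2 ≤ d ∧
        ∀ m : ℕ, 0 < m → m < a * n → a ∣ m →
          ((a * n : ℕ) : ℤ) * (pathSum p.1 m - 2 * ((p.2 : ℤ) - 1)) >
            (m : ℤ) * (2 - ((a : ℤ) - 2 * (c : ℤ)) * (n : ℤ))} =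
      d * Nat.choose (a * n) (c * n + d) := by
  classical
  have hN : 0 < a * n := Nat.mul_pos (by omega) hn
  haveI : NeZero (a * n) := ⟨by omega⟩
  set v : ℕ → Fin (a * n) := fun j => ⟨(a * j) % (a * n), Nat.mod_lt _ hN⟩ with hvdef
  have hv : ∀ j, (v j : ℕ) = (a * j) % (a * n) := fun j => rfl
  have hshift : ∀ (f : Fin (a * n) → ℤ) (i₀ : ℕ), 1 ≤ i₀ →
      ((∀ m : ℕ, 0 < m → m < a * n → a ∣ m →
        ((a * n : ℕ) : ℤ) * (pathSum f m - 2 * ((i₀ : ℤ) - 1)) >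
          (m : ℤ) * (2 - ((a : ℤ) - 2 * (c : ℤ)) * (n : ℤ)))
        ↔ Good a c n f (i₀ - 1)) := by
    intro f i₀ h1
    unfold Good
    have hcast : ((i₀ - 1 : ℕ) : ℤ) = (i₀ : ℤ) - 1 := by
      rw [Nat.cast_sub h1, Nat.cast_one]
    rw [hcast]
  have hcard : Nat.card {p : (Fin (a * n) → ℤ) × ℕ //
        IsLatticePath a c d n p.1 ∧ 1 ≤ p.2 ∧ p.2 ≤ d ∧
        ∀ m : ℕ, 0 < m → m < a * n → a ∣ m →
          ((a * n : ℕ) : ℤ) * (pathSum p.1 m - 2 * ((p.2 : ℤ) - 1)) >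
            (m : ℤ) * (2 - ((a : ℤ) - 2 * (c : ℤ)) * (n : ℤ))}
      = (Finset.univ.filter (fun r : Finset (Fin (a * n)) × Fin d =>
          r.1.card = c * n + d ∧ Good a c n (indic r.1) (r.2 : ℕ))).card := by
    have e : {p : (Fin (a * n) → ℤ) × ℕ //
        IsLatticePath a c d n p.1 ∧ 1 ≤ p.2 ∧ p.2 ≤ d ∧
        ∀ m : ℕ, 0 < m → m < a * n → a ∣ m →
          ((a * n : ℕ) : ℤ) * (pathSum p.1 m - 2 * ((p.2 : ℤ) - 1)) >
            (m : ℤ) * (2 - ((a : ℤ) - 2 * (c : ℤ)) * (n : ℤ))}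
        ≃ {r : Finset (Fin (a * n)) × Fin d //
            r.1.card = c * n + d ∧ Good a c n (indic r.1) (r.2 : ℕ)} :=
      { toFun := fun p => ⟨(Finset.univ.filter (fun t => p.1.1 t = 1),
          ⟨p.1.2 - 1, by obtain ⟨-, h1, h2, -⟩ := p.2; omega⟩),
          p.2.1.2,
          by rw [indic_filter p.1.1 p.2.1.1]
             exact (hshift p.1.1 p.1.2 p.2.2.1).mp p.2.2.2.2⟩
        invFun := fun r => ⟨(indic r.1.1, (r.1.2 : ℕ) + 1),
          ⟨fun t => indic_pm r.1.1 t,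
            by show (Finset.univ.filter (fun t => indic r.1.1 t = 1)).card = c * n + d
               rw [filter_indic]; exact r.2.1⟩,
          by omega,
          by have := r.1.2.isLt; omega,
          by refine (hshift (indic r.1.1) ((r.1.2 : ℕ) + 1) (by omega)).mpr ?_
             rw [Nat.add_sub_cancel]; exact r.2.2⟩
        left_inv := fun p => by
          apply Subtype.ext
          obtain ⟨⟨f, i₀⟩, hp⟩ := p
          refine Prod.ext_iff.mpr ⟨indic_filter f hp.1.1, ?_⟩
          show (i₀ - 1) + 1 = i₀
          have h1 := hp.2.1
          omega
        right_inv := fun r => by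
          apply Subtype.ext
          obtain ⟨⟨s, i⟩, hr⟩ := r
          refine Prod.ext_iff.mpr ⟨filter_indic s, ?_⟩
          exact Fin.ext (by simp) }
    rw [Nat.card_congr e, Nat.card_eq_fintype_card, Fintype.card_subtype]
  have hchoose : (Finset.univ.filter
      (fun s : Finset (Fin (a * n)) => s.card = c * n + d)).card
      = (a * n).choose (c * n + d) := by
    have h1 : Finset.univ.filter (fun s : Finset (Fin (a * n)) => s.card = c * n + d)
        = Finset.powersetCard (c * n + d) (Finset.univ : Finset (Fin (a * n))) := by
      rw [Finset.powersetCard_eq_filter, Finset.powerset_univ]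
    rw [h1, Finset.card_powersetCard, Finset.card_univ, Fintype.card_fin]
  have himg : ∀ (w : Fin (a * n)) (s : Finset (Fin (a * n))),
      (s.image (· + w)).image (· - w) = s := by
    intro w s
    rw [Finset.image_image]
    have h2 : ((· - w) ∘ (· + w) : Fin (a * n) → Fin (a * n)) = id :=
      funext fun u => by simp
    rw [h2, Finset.image_id]
  have himg' : ∀ (w : Fin (a * n)) (s : Finset (Fin (a * n))),
      (s.image (· - w)).image (· + w) = s := by
    intro w s
    rw [Finset.image_image]
    have h2 : ((· + w) ∘ (· - w) : Fin (a * n) → Fin (a * n)) = id :=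
      funext fun u => by simp
    rw [h2, Finset.image_id]
  have haddinj : ∀ w : Fin (a * n), Function.Injective (· + w : Fin (a * n) → Fin (a * n)) :=
    fun w x y h => by simpa using congrArg (· - w) h
  have hsubinj : ∀ w : Fin (a * n), Function.Injective (· - w : Fin (a * n) → Fin (a * n)) :=
    fun w x y h => by simpa using congrArg (· + w) h
  have hrot : ∀ j : ℕ,
      (Finset.univ.filter (fun r : Finset (Fin (a * n)) × Fin d =>
        r.1.card = c * n + d ∧ Good a c n (indic r.1) (r.2 : ℕ))).card
      = (Finset.univ.filter (fun r : Finset (Fin (a * n)) × Fin d =>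
        r.1.card = c * n + d ∧ Good a c n (rotFn (v j) (indic r.1)) (r.2 : ℕ))).card := by
    intro j
    apply Finset.card_nbij' (i := fun r => (r.1.image (· + v j), r.2))
      (j := fun r => (r.1.image (· - v j), r.2))
    · intro r hr
      simp only [Finset.mem_coe, Finset.mem_filter] at hr ⊢
      obtain ⟨-, hcardr, hgood⟩ := hr
      refine ⟨Finset.mem_univ _, ?_, ?_⟩
      · rw [Finset.card_image_of_injective _ (haddinj (v j))]; exact hcardr
      · show Good a c n (rotFn (v j) (indic ((r.1.image (· + v j))))) (r.2 : ℕ)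
        rw [rotFn_indic, himg]; exact hgood
    · intro r hr
      simp only [Finset.mem_coe, Finset.mem_filter] at hr ⊢
      obtain ⟨-, hcardr, hgood⟩ := hr
      rw [rotFn_indic] at hgood
      exact ⟨Finset.mem_univ _,
        by rw [Finset.card_image_of_injective _ (hsubinj (v j))]; exact hcardr, hgood⟩
    · intro r hr
      exact Prod.ext_iff.mpr ⟨himg (v j) r.1, rfl⟩
    · intro r hr
      exact Prod.ext_iff.mpr ⟨himg' (v j) r.1, rfl⟩
  have hstep : ∀ j : ℕ,
      (Finset.univ.filter (fun r : Finset (Fin (a * n)) × Fin d =>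
        r.1.card = c * n + d ∧ Good a c n (rotFn (v j) (indic r.1)) (r.2 : ℕ))).card
      = ∑ s ∈ Finset.univ.filter (fun s : Finset (Fin (a * n)) => s.card = c * n + d),
          (Finset.univ.filter
            (fun i : Fin d => Good a c n (rotFn (v j) (indic s)) (i : ℕ))).card :=
    by
    intro j
    have h := card_filter_prod (fun s : Finset (Fin (a * n)) => s.card = c * n + d)
      (fun s (i : Fin d) => Good a c n (rotFn (v j) (indic s)) (i : ℕ))
    convert h using 2 <;> · ext r; simp
  rw [hcard]
  calc n * (Finset.univ.filter (fun r : Finset (Fin (a * n)) × Fin d =>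
          r.1.card = c * n + d ∧ Good a c n (indic r.1) (r.2 : ℕ))).card
      = ∑ _j ∈ range n, (Finset.univ.filter (fun r : Finset (Fin (a * n)) × Fin d =>
          r.1.card = c * n + d ∧ Good a c n (indic r.1) (r.2 : ℕ))).card := by
        rw [Finset.sum_const, Finset.card_range, smul_eq_mul]
    _ = ∑ j ∈ range n,
          ∑ s ∈ Finset.univ.filter (fun s : Finset (Fin (a * n)) => s.card = c * n + d),
            (Finset.univ.filter
              (fun i : Fin d => Good a c n (rotFn (v j) (indic s)) (i : ℕ))).card := by
        refine Finset.sum_congr rfl fun j _ => ?_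
        rw [hrot j, hstep j]
    _ = ∑ s ∈ Finset.univ.filter (fun s : Finset (Fin (a * n)) => s.card = c * n + d),
          ∑ j ∈ range n,
            (Finset.univ.filter
              (fun i : Fin d => Good a c n (rotFn (v j) (indic s)) (i : ℕ))).card :=
        Finset.sum_comm
    _ = ∑ s ∈ Finset.univ.filter (fun s : Finset (Fin (a * n)) => s.card = c * n + d), d := by
        refine Finset.sum_congr rfl fun s hs => ?_
        have hsl : IsLatticePath a c d n (indic s) := by
          refine ⟨fun t => indic_pm s t, ?_⟩
          rw [filter_indic]
          exact (Finset.mem_filter.mp hs).2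
        exact path_cycle a c d n (by omega) hn (indic s) hsl v hv
    _ = (Finset.univ.filter
          (fun s : Finset (Fin (a * n)) => s.card = c * n + d)).card * d := by
        rw [Finset.sum_const, smul_eq_mul]
    _ = d * Nat.choose (a * n) (c * n + d) := by rw [hchoose, Nat.mul_comm]
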